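/- Let E be a real inner product space, s : E → ℝ convex, R : E → ℝ differentiable with gradient ∇R Lipschitz continuous with constant L ≥ 0, c ∈ E, γ > 0, α > 0, and x ∈ E. Define H(y) = s(y) + R(y) + (γ/2)‖y − c‖². If x⁺ is a global minimizer of the prox-linear subproblem y ↦ s(y) + ⟨∇R(x), y − x⟩ + (α/2)‖y − x‖² + (γ/2)‖y − c‖², then H(x) ≥ H(x⁺) + (α + (γ − L)/2)‖x⁺ − x‖². (This is the sufficient-descent inequality for the prox-linear update of the output-layer block, used to prove global convergence of BCD with general smooth losses.) -/

import Mathlib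

open intervalIntegral in
lemma descent_lemma {E : Type*} [NormedAddCommGroup E] [InnerProductSpace ℝ E]
    (R : E → ℝ) (R' : E → E) (hR : ∀ y : E, HasFDerivAt R (innerSL ℝ (R' y)) y)
    (L : ℝ) (hL : 0 ≤ L) (hLip : ∀ y z : E, ‖R' y - R' z‖ ≤ L * ‖y - z‖)
    (x y : E) :
    R y ≤ R x + (inner ℝ (R' x) (y - x) : ℝ) + (L / 2) * ‖y - x‖ ^ 2 := by
  set d := y - x with hd
  have hcontR' : Continuous R' := by
    have : LipschitzWith (Real.toNNReal L) R' := by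
      apply LipschitzWith.of_dist_le_mul
      intro a b
      rw [dist_eq_norm, dist_eq_norm, Real.coe_toNNReal L hL]
      exact hLip a b
    exact this.continuous
  have hline : ∀ t : ℝ, HasDerivAt (fun t : ℝ => x + t • d) d t := by
    intro t
    simpa using ((hasDerivAt_id t).smul_const d).const_add x
  have hg : ∀ t : ℝ, HasDerivAt (fun t : ℝ => R (x + t • d))
      ((inner ℝ (R' (x + t • d)) d : ℝ)) t := by
    intro t
    exact (hR (x + t • d)).comp_hasDerivAt t (hline t)
  have hcont : Continuous fun t : ℝ => (inner ℝ (R' (x + t • d)) d : ℝ) := by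
    exact (continuous_inner.comp ((hcontR'.comp (continuous_const.add
      (continuous_id.smul continuous_const))).prodMk continuous_const))
  have hint : R (x + (1:ℝ) • d) - R (x + (0:ℝ) • d)
      = ∫ t in (0:ℝ)..1, (inner ℝ (R' (x + t • d)) d : ℝ) :=
    (integral_eq_sub_of_hasDerivAt (fun t _ => hg t) (hcont.intervalIntegrable 0 1)).symm
  have hbound : ∫ t in (0:ℝ)..1, (inner ℝ (R' (x + t • d)) d : ℝ)
      ≤ ∫ t in (0:ℝ)..1, ((inner ℝ (R' x) d : ℝ) + L * t * ‖d‖ ^ 2) := by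
    apply integral_mono_on (by norm_num) (hcont.intervalIntegrable 0 1)
      (((continuous_const.add ((continuous_const.mul continuous_id').mul
        continuous_const))).intervalIntegrable 0 1)
    intro t ht
    rcases ht with ⟨ht0, ht1⟩
    have h1 : (inner ℝ (R' (x + t • d)) d : ℝ) - (inner ℝ (R' x) d : ℝ)
        = (inner ℝ (R' (x + t • d) - R' x) d : ℝ) := by rw [inner_sub_left]
    have h2 : (inner ℝ (R' (x + t • d) - R' x) d : ℝ) ≤ L * t * ‖d‖ ^ 2 := by
      calc (inner ℝ (R' (x + t • d) - R' x) d : ℝ)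
          ≤ ‖R' (x + t • d) - R' x‖ * ‖d‖ := real_inner_le_norm _ _
        _ ≤ (L * ‖x + t • d - x‖) * ‖d‖ := by
            gcongr; exact hLip _ _
        _ = L * t * ‖d‖ ^ 2 := by
            rw [add_sub_cancel_left, norm_smul, Real.norm_eq_abs, abs_of_nonneg ht0]
            ring
    simp only [Pi.add_apply, Pi.mul_apply]
    linarith
  have hval : ∫ t in (0:ℝ)..1, ((inner ℝ (R' x) d : ℝ) + L * t * ‖d‖ ^ 2)
      = (inner ℝ (R' x) d : ℝ) + (L / 2) * ‖d‖ ^ 2 := by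
    have heq : (fun t : ℝ => (inner ℝ (R' x) d : ℝ) + L * t * ‖d‖ ^ 2)
        = fun t : ℝ => (inner ℝ (R' x) d : ℝ) + (L * ‖d‖ ^ 2) * t := by
      funext t; ring
    rw [heq, integral_add (f := fun _ => (inner ℝ (R' x) d : ℝ)) (g := fun t => (L * ‖d‖ ^ 2) * t) (intervalIntegrable_const)
      ((continuous_const.mul continuous_id' : Continuous fun t : ℝ => (L * ‖d‖ ^ 2) * t).intervalIntegrable 0 1),
      integral_const_mul, integral_id, integral_const]
    norm_num
    ring
  have hy : x + (1:ℝ) • d = y := by rw [one_smul, hd]; abel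
  have hx : x + (0:ℝ) • d = x := by simp
  rw [hy, hx] at hint
  linarith [hint ▸ (hbound.trans_eq hval)]

lemma norm_combo_sq {E : Type*} [NormedAddCommGroup E] [InnerProductSpace ℝ E]
    (a b : E) (t : ℝ) :
    ‖t • a + (1 - t) • b‖ ^ 2
      = t * ‖a‖ ^ 2 + (1 - t) * ‖b‖ ^ 2 - t * (1 - t) * ‖a - b‖ ^ 2 := by
  have h : ∀ v : E, ‖v‖ ^ 2 = (inner ℝ v v : ℝ) := fun v => (real_inner_self_eq_norm_sq v).symm
  simp only [h, inner_add_add_self, inner_sub_sub_self, real_inner_smul_left,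
    real_inner_smul_right]
  ring

set_option maxHeartbeats 1000000 in
/-- Sufficient-descent inequality for the prox-linear update:
if `s` is convex, `R` is differentiable with gradient `R'` (i.e. the Fréchet
derivative of `R` at `y` is `h ↦ ⟨R' y, h⟩`) and `R'` is `L`-Lipschitz, and
`x⁺` globally minimizes the prox-linear subproblem
`y ↦ s y + ⟨∇R x, y − x⟩ + (α/2)‖y − x‖² + (γ/2)‖y − c‖²`, then
`H x ≥ H x⁺ + (α + (γ − L)/2)‖x⁺ − x‖²` where `H y = s y + R y + (γ/2)‖y − c‖²`. -/
theorem proxlinear_sufficient_descent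
    {E : Type*} [NormedAddCommGroup E] [InnerProductSpace ℝ E]
    (s R : E → ℝ) (hs : ConvexOn ℝ Set.univ s)
    (R' : E → E) (hR : ∀ y : E, HasFDerivAt R (innerSL ℝ (R' y)) y)
    (L : ℝ) (hL : 0 ≤ L) (hLip : ∀ y z : E, ‖R' y - R' z‖ ≤ L * ‖y - z‖)
    (c : E) (γ α : ℝ) (hγ : 0 < γ) (hα : 0 < α) (x xplus : E)
    (H : E → ℝ) (hH : ∀ y : E, H y = s y + R y + (γ / 2) * ‖y - c‖ ^ 2)
    (hmin : ∀ y : E,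
      s xplus + (inner ℝ (R' x) (xplus - x) : ℝ) + (α / 2) * ‖xplus - x‖ ^ 2
          + (γ / 2) * ‖xplus - c‖ ^ 2
        ≤ s y + (inner ℝ (R' x) (y - x) : ℝ) + (α / 2) * ‖y - x‖ ^ 2
          + (γ / 2) * ‖y - c‖ ^ 2) :
    H x ≥ H xplus + (α + (γ - L) / 2) * ‖xplus - x‖ ^ 2 := by
  set Q : E → ℝ := fun y =>
    s y + (inner ℝ (R' x) (y - x) : ℝ) + (α / 2) * ‖y - x‖ ^ 2 + (γ / 2) * ‖y - c‖ ^ 2 with hQ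
  set K : ℝ := ((α + γ) / 2) * ‖x - xplus‖ ^ 2 with hK
  set C : ℝ := Q x - Q xplus with hC
  have hC0 : 0 ≤ C := by
    rw [hC]
    have h := hmin x
    rw [hQ]
    exact sub_nonneg.mpr h
  -- per-t strong convexity combined with minimality
  have hstep : ∀ t : ℝ, 0 < t → t ≤ 1 → (1 - t) * K ≤ C := by
    intro t ht0 ht1
    set yt : E := t • x + (1 - t) • xplus with hyt
    have hconv : s yt ≤ t * s x + (1 - t) * s xplus :=
      hs.2 (Set.mem_univ x) (Set.mem_univ xplus) ht0.le (by linarith) (by ring)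
    have hsub1 : yt - x = t • (x - x) + (1 - t) • (xplus - x) := by
      rw [hyt]; module
    have hsub2 : yt - c = t • (x - c) + (1 - t) • (xplus - c) := by
      rw [hyt]; module
    have hq1 : ‖yt - x‖ ^ 2 = t * ‖x - x‖ ^ 2 + (1 - t) * ‖xplus - x‖ ^ 2
        - t * (1 - t) * ‖(x - x) - (xplus - x)‖ ^ 2 := by
      rw [hsub1]; exact norm_combo_sq _ _ t
    have hq2 : ‖yt - c‖ ^ 2 = t * ‖x - c‖ ^ 2 + (1 - t) * ‖xplus - c‖ ^ 2
        - t * (1 - t) * ‖(x - c) - (xplus - c)‖ ^ 2 := by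
      rw [hsub2]; exact norm_combo_sq _ _ t
    have he1 : (x - x) - (xplus - x) = x - xplus := by abel
    have he2 : (x - c) - (xplus - c) = x - xplus := by abel
    rw [he1] at hq1; rw [he2] at hq2
    have hinner : (inner ℝ (R' x) (yt - x) : ℝ)
        = t * (inner ℝ (R' x) (x - x) : ℝ) + (1 - t) * (inner ℝ (R' x) (xplus - x) : ℝ) := by
      rw [hsub1, inner_add_right, real_inner_smul_right, real_inner_smul_right]
    have hQyt : Q yt ≤ t * Q x + (1 - t) * Q xplus - t * (1 - t) * K := by
      simp only [hQ, hK]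
      rw [hinner, hq1, hq2]
      have hxx : ‖x - x‖ = 0 := by simp
      nlinarith [hconv]
    have hmyt := hmin yt
    have : Q xplus ≤ Q yt := hmyt
    -- t * (1-t) * K ≤ t * C
    have h1 : t * ((1 - t) * K) ≤ t * C := by
      have : Q xplus ≤ t * Q x + (1 - t) * Q xplus - t * (1 - t) * K := this.trans hQyt
      nlinarith
    exact le_of_mul_le_mul_left h1 ht0
  -- limit t → 0 : K ≤ C
  have hKC : K ≤ C := by
    by_contra hcon
    push_neg at hcon
    have hKpos : 0 < K := lt_of_le_of_lt hC0 hcon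
    set t : ℝ := (K - C) / (2 * K) with htdef
    have ht0 : 0 < t := div_pos (by linarith) (by linarith)
    have ht1 : t ≤ 1 := by
      rw [div_le_one (by linarith)]; linarith
    have := hstep t ht0 ht1
    have htK : t * K = (K - C) / 2 := by
      rw [htdef, div_mul_eq_mul_div, div_eq_div_iff (ne_of_gt (by linarith)) two_ne_zero]
      ring
    nlinarith
  -- descent lemma
  have hdesc : R xplus ≤ R x + (inner ℝ (R' x) (xplus - x) : ℝ) + (L / 2) * ‖xplus - x‖ ^ 2 :=
    descent_lemma R R' hR L hL hLip x xplus
  have hnorm : ‖x - xplus‖ = ‖xplus - x‖ := norm_sub_rev _ _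
  have hQx : Q x = s x + (γ / 2) * ‖x - c‖ ^ 2 := by simp [hQ]
  have hQxp : Q xplus = s xplus + (inner ℝ (R' x) (xplus - x) : ℝ)
      + (α / 2) * ‖xplus - x‖ ^ 2 + (γ / 2) * ‖xplus - c‖ ^ 2 := by rw [hQ]
  rw [hH x, hH xplus]
  rw [hK, hnorm] at hKC
  rw [hC, hQx, hQxp] at hKC
  nlinarith [hKC, hdesc]
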